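/- Let X be a V-space with uniformly vanishing asymmetry. Then X̂, the V-space of minimal Cauchy filters on X, is Cauchy complete: every proper Cauchy filter on X̂ converges. -/

import Mathlib

open Filter Set

/-- `a` is well-above `b`: for every `S` with `sInf S ≤ b` some `s ∈ S` satisfies `s ≤ a`. -/
def WellAbove {V : Type*} [CompleteLattice V] (a b : V) : Prop :=
  ∀ S : Set V, sInf S ≤ b → ∃ s ∈ S, s ≤ a

/-- Flagg's value quantales (bottom element plays the role of `0`). -/
class ValueQuantale (V : Type*) extends CompleteLattice V, Add V where
  add_comm' : ∀ a b : V, a + b = b + a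
  add_assoc' : ∀ a b c : V, a + b + c = a + (b + c)
  add_bot' : ∀ a : V, a + ⊥ = a
  sInf_wellAbove : ∀ x : V, x = sInf {y | WellAbove y x}
  add_sInf' : ∀ (x : V) (S : Set V), x + sInf S = sInf ((x + ·) '' S)
  inf_wellAbove_bot : ∀ a b : V, WellAbove a ⊥ → WellAbove b ⊥ → WellAbove (a ⊓ b) ⊥

variable {V : Type*} [ValueQuantale V] {X : Type*}

/-- n-fold sum `n·δ`. -/
def nmul : ℕ → V → V
  | 0, _ => ⊥
  | n + 1, δ => δ + nmul n δ

/-- The ball `B_ε(x)`. -/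
def ball' (d : X → X → V) (ε : V) (x : X) : Set X := {y | d x y ≤ ε}

/-- The op-ball `B^ε(x)`. -/
def opBall (d : X → X → V) (ε : V) (x : X) : Set X := {y | d y x ≤ ε}

/-- `B_ε(S)`. -/
def ballSet (d : X → X → V) (ε : V) (S : Set X) : Set X := ⋃ s ∈ S, ball' d ε s

/-- Cauchy filter on a `V`-space. -/
def IsCauchyF (d : X → X → V) (F : Filter X) : Prop :=
  ∀ ε : V, WellAbove ε ⊥ → ∃ x : X, ball' d ε x ∈ F

/-- op-Cauchy filter on a `V`-space. -/
def IsOpCauchyF (d : X → X → V) (F : Filter X) : Prop :=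
  ∀ ε : V, WellAbove ε ⊥ → ∃ x : X, opBall d ε x ∈ F

/-- Round filter. -/
def IsRound (d : X → X → V) (F : Filter X) : Prop :=
  ∀ F₀ ∈ F, ∃ ε : V, WellAbove ε ⊥ ∧ ∀ x : X, ball' d ε x ∈ F → ball' d ε x ⊆ F₀

/-- Minimal Cauchy filter: Cauchy with no proper Cauchy subfilter.
(A subfilter `G ⊆ F` in the set-of-sets sense corresponds to `G.sets ⊆ F.sets`.) -/
def IsMinCauchy (d : X → X → V) (F : Filter X) : Prop :=
  IsCauchyF d F ∧ ∀ G : Filter X, IsCauchyF d G → G.sets ⊆ F.sets → G = F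

/-- `F_≻`: the filter generated by the sets `B_ε(F₀)`, `F₀ ∈ F`, `ε ≻ 0`. -/
def roundify (d : X → X → V) (F : Filter X) : Filter X :=
  Filter.generate {S | ∃ F₀ ∈ F, ∃ ε : V, WellAbove ε ⊥ ∧ S = ballSet d ε F₀}

/-- Uniformly vanishing asymmetry. -/
def UVA (d : X → X → V) : Prop :=
  ∀ ε : V, WellAbove ε ⊥ → ∃ δ : V, WellAbove δ ⊥ ∧ ∀ x y : X, d y x ≤ δ → d x y ≤ ε

/-- Distance between subsets: `d(S,T) = ⋀_{s∈S,t∈T} d(s,t)`. -/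
def distSet (d : X → X → V) (S T : Set X) : V := ⨅ s ∈ S, ⨅ t ∈ T, d s t

/-- Distance between filters: `d(F,G) = ⋁_{F₀∈F,G₀∈G} d(F₀,G₀)`. -/
def distF (d : X → X → V) (F G : Filter X) : V :=
  ⨆ F₀ ∈ F, ⨆ G₀ ∈ G, distSet d F₀ G₀

/-- `F_x`, the filter generated by the balls `B_ε(x)`, `ε ≻ 0`. -/
def ptFilter (d : X → X → V) (x : X) : Filter X :=
  Filter.generate {S | ∃ ε : V, WellAbove ε ⊥ ∧ S = ball' d ε x}

/-- `F^x`, the filter generated by the op-balls `B^ε(x)`, `ε ≻ 0`. -/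
def opPtFilter (d : X → X → V) (x : X) : Filter X :=
  Filter.generate {S | ∃ ε : V, WellAbove ε ⊥ ∧ S = opBall d ε x}
namespace VQAux

theorem wa_mono {a b : V} (h : WellAbove a (⊥ : V)) (hab : a ≤ b) : WellAbove b ⊥ :=
  fun S hS => (h S hS).imp fun s hs => ⟨hs.1, hs.2.trans hab⟩

theorem sInf_wa_bot : sInf {y : V | WellAbove y ⊥} = ⊥ :=
  (ValueQuantale.sInf_wellAbove (⊥ : V)).symm

instance : Zero V := ⟨(⊥ : V)⟩

theorem vq_zero : (0 : V) = ⊥ := rfl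

instance : AddCommMonoid V where
  add_assoc := ValueQuantale.add_assoc'
  zero_add a := by rw [ValueQuantale.add_comm']; exact ValueQuantale.add_bot' a
  add_zero := ValueQuantale.add_bot'
  add_comm := ValueQuantale.add_comm'
  nsmul := nsmulRec

theorem vq_add_sInf (x : V) (S : Set V) : x + sInf S = sInf ((x + ·) '' S) :=
  ValueQuantale.add_sInf' x S

theorem vq_add_iInf {ι : Sort*} (x : V) (f : ι → V) : x + ⨅ i, f i = ⨅ i, x + f i := by
  rw [iInf, vq_add_sInf, ← Set.range_comp, iInf]
  rfl

instance : CovariantClass V V (· + ·) (· ≤ ·) := by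
  constructor
  intro x a b hab
  have h : x + (a ⊓ b) = (x + a) ⊓ (x + b) := by
    have h2 := ValueQuantale.add_sInf' x {a, b}
    simpa [Set.image_pair] using h2
  calc x + a = x + (a ⊓ b) := by rw [inf_eq_left.2 hab]
    _ = (x + a) ⊓ (x + b) := h
    _ ≤ x + b := inf_le_right

instance : CovariantClass V V (Function.swap (· + ·)) (· ≤ ·) :=
  ⟨fun x a b hab => by
    simp only [Function.swap]
    rw [add_comm a x, add_comm b x]
    exact add_le_add_right hab x⟩

theorem vq_iInf_add {ι : Sort*} (x : V) (f : ι → V) : (⨅ i, f i) + x = ⨅ i, f i + x := by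
  rw [add_comm, vq_add_iInf]
  exact iInf_congr fun i => add_comm x (f i)

theorem vq_le_of_forall {a b : V} (h : ∀ η : V, WellAbove η ⊥ → a ≤ b + η) : a ≤ b := by
  have h2 : a ≤ b + sInf {y : V | WellAbove y ⊥} := by
    rw [vq_add_sInf]
    refine le_sInf ?_
    rintro _ ⟨η, hη, rfl⟩
    exact h η hη
  rwa [sInf_wa_bot, ValueQuantale.add_bot'] at h2

theorem vq_halve {ε : V} (hε : WellAbove ε ⊥) : ∃ δ : V, WellAbove δ ⊥ ∧ δ + δ ≤ ε := by
  have hS : sInf {s : V | ∃ p q : V, WellAbove p ⊥ ∧ WellAbove q ⊥ ∧ s = p + q} ≤ ⊥ := by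
    refine le_trans (le_sInf ?_) sInf_wa_bot.le
    intro p hp
    calc sInf {s : V | ∃ p q : V, WellAbove p ⊥ ∧ WellAbove q ⊥ ∧ s = p + q}
        ≤ sInf ((p + ·) '' {y : V | WellAbove y ⊥}) := by
          refine sInf_le_sInf ?_
          rintro _ ⟨q, hq, rfl⟩
          exact ⟨p, q, hp, hq, rfl⟩
      _ = p + sInf {y : V | WellAbove y ⊥} := (vq_add_sInf _ _).symm
      _ = p := by rw [sInf_wa_bot, ValueQuantale.add_bot']
  obtain ⟨s, ⟨p, q, hp, hq, rfl⟩, hs⟩ := hε _ hS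
  exact ⟨p ⊓ q, ValueQuantale.inf_wellAbove_bot p q hp hq,
    le_trans (add_le_add inf_le_left inf_le_right) hs⟩

theorem vq_small (n : ℕ) {ε : V} (hε : WellAbove ε ⊥) :
    ∃ δ : V, WellAbove δ ⊥ ∧ δ ≤ ε ∧ nmul n δ ≤ ε := by
  induction n generalizing ε with
  | zero => exact ⟨ε, hε, le_rfl, bot_le⟩
  | succ n ih =>
    obtain ⟨t, ht, htt⟩ := vq_halve hε
    have ht' : t ≤ ε :=
      calc t = t + ⊥ := (ValueQuantale.add_bot' t).symm
        _ ≤ t + t := add_le_add_right bot_le t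
        _ ≤ ε := htt
    obtain ⟨δ, hδ, hδt, hn⟩ := ih ht
    refine ⟨δ, hδ, hδt.trans ht', ?_⟩
    show δ + nmul n δ ≤ ε
    exact le_trans (add_le_add hδt hn) htt

theorem nmul_three (a : V) : nmul 3 a = a + (a + a) := by
  show a + (a + (a + ⊥)) = a + (a + a)
  rw [ValueQuantale.add_bot']

theorem nmul_six (a : V) : nmul 6 a = a + (a + (a + (a + (a + a)))) := by
  show a + (a + (a + (a + (a + (a + ⊥))))) = _
  rw [ValueQuantale.add_bot']

end VQAux
namespace VQAux

theorem distSet_le {d : X → X → V} {S T : Set X} {s t : X} (hs : s ∈ S) (ht : t ∈ T) :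
    distSet d S T ≤ d s t :=
  le_trans (iInf₂_le s hs) (iInf₂_le t ht)

theorem distSet_le_distF {d : X → X → V} {F G : Filter X} {S T : Set X}
    (hS : S ∈ F) (hT : T ∈ G) : distSet d S T ≤ distF d F G :=
  le_iSup₂_of_le S hS (le_iSup₂_of_le T hT le_rfl)

theorem distF_le {d : X → X → V} {F G : Filter X} {c : V}
    (h : ∀ S ∈ F, ∀ T ∈ G, distSet d S T ≤ c) : distF d F G ≤ c :=
  iSup₂_le fun S hS => iSup₂_le fun T hT => h S hS T hT

theorem distF_mono_left {d : X → X → V} {F F' G : Filter X} (h : F' ≤ F) :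
    distF d F G ≤ distF d F' G :=
  distF_le fun S hS T hT => distSet_le_distF (h hS) hT

theorem lemA {d : X → X → V} (htri : ∀ x y z, d x z ≤ d x y + d y z)
    {F G : Filter X} {xF xG : X} {γF γG s : V}
    (hbF : ball' d γF xF ∈ F) (hbG : ball' d γG xG ∈ G)
    (hflip : ∀ a b : X, d b a ≤ γG → d a b ≤ s) :
    d xF xG ≤ γF + (distF d F G + s) := by
  have key : d xF xG ≤ γF + (distSet d (ball' d γF xF) (ball' d γG xG) + s) := by
    rw [distSet]
    simp only [vq_iInf_add, vq_add_iInf]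
    refine le_iInf fun f => le_iInf fun hf => le_iInf fun g => le_iInf fun hg => ?_
    have hf' : d xF f ≤ γF := hf
    have hg' : d xG g ≤ γG := hg
    calc d xF xG ≤ d xF f + d f xG := htri _ _ _
      _ ≤ d xF f + (d f g + d g xG) := add_le_add_right (htri _ _ _) _
      _ ≤ γF + (d f g + s) := add_le_add hf' (add_le_add_right (hflip _ _ hg') _)
  exact key.trans (add_le_add_right (add_le_add_left (distSet_le_distF hbF hbG) s) γF)

theorem lemB {d : X → X → V} (htri : ∀ x y z, d x z ≤ d x y + d y z)
    {F G : Filter X} (hF : F ≠ ⊥) (hG : G ≠ ⊥) {xF xG : X} {γF γG s : V}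
    (hbF : ball' d γF xF ∈ F) (hbG : ball' d γG xG ∈ G)
    (hflip : ∀ a b : X, d b a ≤ γF → d a b ≤ s) :
    distF d F G ≤ s + (d xF xG + γG) := by
  haveI : F.NeBot := ⟨hF⟩
  haveI : G.NeBot := ⟨hG⟩
  refine distF_le fun S hS T hT => ?_
  obtain ⟨f, hfS, hf⟩ := Filter.nonempty_of_mem (Filter.inter_mem hS hbF)
  obtain ⟨g, hgT, hg⟩ := Filter.nonempty_of_mem (Filter.inter_mem hT hbG)
  have hf' : d xF f ≤ γF := hf
  have hg' : d xG g ≤ γG := hg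
  calc distSet d S T ≤ d f g := distSet_le hfS hgT
    _ ≤ d f xF + d xF g := htri _ _ _
    _ ≤ d f xF + (d xF xG + d xG g) := add_le_add_right (htri _ _ _) _
    _ ≤ s + (d xF xG + γG) := add_le_add (hflip _ _ hf') (add_le_add_right hg' _)

theorem lemT {d : X → X → V} (htri : ∀ x y z, d x z ≤ d x y + d y z) (hUVA : UVA d)
    {F G H : Filter X} (hF : F ≠ ⊥) (hFc : IsCauchyF d F) (hG : G ≠ ⊥) (hGc : IsCauchyF d G)
    (hH : H ≠ ⊥) (hHc : IsCauchyF d H) :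
    distF d F H ≤ distF d F G + distF d G H := by
  refine vq_le_of_forall fun η hη => ?_
  obtain ⟨a, ha, haη, h6⟩ := vq_small 6 hη
  obtain ⟨u, hu, huP⟩ := hUVA a ha
  have hγ : WellAbove (u ⊓ a) ⊥ := ValueQuantale.inf_wellAbove_bot u a hu ha
  have hγa : (u ⊓ a : V) ≤ a := inf_le_right
  have hflip : ∀ p q : X, d q p ≤ u ⊓ a → d p q ≤ a :=
    fun p q h => huP p q (h.trans inf_le_left)
  obtain ⟨xF, hbF⟩ := hFc (u ⊓ a) hγ
  obtain ⟨xG, hbG⟩ := hGc (u ⊓ a) hγ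
  obtain ⟨xH, hbH⟩ := hHc (u ⊓ a) hγ
  have d1 : distF d F H ≤ a + (d xF xH + (u ⊓ a)) := lemB htri hF hH hbF hbH hflip
  have d3 : d xF xG ≤ (u ⊓ a) + (distF d F G + a) := lemA htri hbF hbG hflip
  have d4 : d xG xH ≤ (u ⊓ a) + (distF d G H + a) := lemA htri hbG hbH hflip
  have d2 : d xF xH ≤ ((u ⊓ a) + (distF d F G + a)) + ((u ⊓ a) + (distF d G H + a)) :=
    (htri xF xG xH).trans (add_le_add d3 d4)
  calc distF d F H
      ≤ a + ((((u ⊓ a) + (distF d F G + a)) + ((u ⊓ a) + (distF d G H + a))) + (u ⊓ a)) :=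
        d1.trans (add_le_add_right (add_le_add_left d2 _) a)
    _ ≤ a + (((a + (distF d F G + a)) + (a + (distF d G H + a))) + a) := by
        refine add_le_add_right (add_le_add (add_le_add ?_ ?_) hγa) a
        · exact add_le_add_left hγa _
        · exact add_le_add_left hγa _
    _ = (distF d F G + distF d G H) + (a + (a + (a + (a + (a + a))))) := by abel
    _ ≤ (distF d F G + distF d G H) + η := by
        refine add_le_add_right (le_trans (le_of_eq ?_) h6) _
        rw [nmul_six]

end VQAux
namespace VQAux

theorem lemUVAhat {d : X → X → V} (htri : ∀ x y z, d x z ≤ d x y + d y z) (hUVA : UVA d)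
    {ε : V} (hε : WellAbove ε ⊥) :
    ∃ ρ : V, WellAbove ρ ⊥ ∧ ∀ F G : Filter X, F ≠ ⊥ → IsCauchyF d F → G ≠ ⊥ → IsCauchyF d G →
      distF d F G ≤ ρ → distF d G F ≤ ε := by
  obtain ⟨a, ha, haε, h3a⟩ := vq_small 3 hε
  obtain ⟨ua, hua, huaP⟩ := hUVA a ha
  obtain ⟨t, ht, hta, h3t⟩ := vq_small 3 hua
  obtain ⟨ut, hut, hutP⟩ := hUVA t ht
  refine ⟨t, ht, ?_⟩
  intro F G hF hFc hG hGc hFG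
  set γ : V := ut ⊓ t ⊓ (ua ⊓ a) with hγdef
  have hγ : WellAbove γ ⊥ :=
    ValueQuantale.inf_wellAbove_bot _ _ (ValueQuantale.inf_wellAbove_bot _ _ hut ht)
      (ValueQuantale.inf_wellAbove_bot _ _ hua ha)
  have hflip_t : ∀ p q : X, d q p ≤ γ → d p q ≤ t :=
    fun p q h => hutP p q (h.trans (le_trans inf_le_left inf_le_left))
  have hflip_a : ∀ p q : X, d q p ≤ γ → d p q ≤ a :=
    fun p q h => huaP p q (h.trans (le_trans inf_le_right inf_le_left))
  have hγt : γ ≤ t := le_trans inf_le_left inf_le_right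
  have hγa : γ ≤ a := le_trans inf_le_right inf_le_right
  obtain ⟨xF, hbF⟩ := hFc γ hγ
  obtain ⟨xG, hbG⟩ := hGc γ hγ
  have h2 : d xF xG ≤ ua := by
    calc d xF xG ≤ γ + (distF d F G + t) := lemA htri hbF hbG hflip_t
      _ ≤ t + (t + t) := add_le_add hγt (add_le_add_left hFG t)
      _ = nmul 3 t := (nmul_three t).symm
      _ ≤ ua := h3t
  have h3 : d xG xF ≤ a := huaP xG xF h2
  calc distF d G F ≤ a + (d xG xF + γ) := lemB htri hG hF hbG hbF hflip_a
    _ ≤ a + (a + a) := add_le_add_right (add_le_add h3 hγa) a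
    _ = nmul 3 a := (nmul_three a).symm
    _ ≤ ε := h3a

theorem lemRound {d : X → X → V} (hrefl : ∀ x, d x x = ⊥)
    (htri : ∀ x y z, d x z ≤ d x y + d y z) (hUVA : UVA d)
    {C : Filter X} (hC : C ≠ ⊥) (hCc : IsCauchyF d C) :
    roundify d C ≠ ⊥ ∧ IsCauchyF d (roundify d C) ∧ IsMinCauchy d (roundify d C) ∧
      C ≤ roundify d C := by
  have hsub : C ≤ roundify d C := by
    show C ≤ Filter.generate _
    rw [Filter.le_generate_iff]
    rintro S ⟨F₀, hF₀, ε, hε, rfl⟩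
    refine Filter.mem_of_superset hF₀ fun f hf => ?_
    exact Set.mem_biUnion hf (show d f f ≤ ε by rw [hrefl]; exact bot_le)
  have hne : roundify d C ≠ ⊥ := fun h => hC (le_bot_iff.1 (h ▸ hsub))
  have hcauchy : IsCauchyF d (roundify d C) := by
    intro ε hε
    obtain ⟨δ, hδ, hδδ⟩ := vq_halve hε
    obtain ⟨x, hx⟩ := hCc δ hδ
    refine ⟨x, ?_⟩
    have hgen : ballSet d δ (ball' d δ x) ∈ roundify d C :=
      Filter.le_generate_iff.1 le_rfl ⟨ball' d δ x, hx, δ, hδ, rfl⟩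
    refine Filter.mem_of_superset hgen fun y hy => ?_
    obtain ⟨f, hf, hyf⟩ := Set.mem_iUnion₂.1 hy
    show d x y ≤ ε
    calc d x y ≤ d x f + d f y := htri _ _ _
      _ ≤ δ + δ := add_le_add hf hyf
      _ ≤ ε := hδδ
  refine ⟨hne, hcauchy, ⟨hcauchy, ?_⟩, hsub⟩
  intro G hGc hGsub
  have hle : G ≤ roundify d C := by
    show G ≤ Filter.generate _
    rw [Filter.le_generate_iff]
    rintro S ⟨F₀, hF₀, ε, hε, rfl⟩
    obtain ⟨a, ha, haa⟩ := vq_halve hε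
    obtain ⟨u, hu, huP⟩ := hUVA a ha
    have hγ : WellAbove (u ⊓ a) ⊥ := ValueQuantale.inf_wellAbove_bot u a hu ha
    obtain ⟨x, hx⟩ := hGc (u ⊓ a) hγ
    have hxC : ball' d (u ⊓ a) x ∈ C := hsub (hGsub hx)
    haveI : C.NeBot := ⟨hC⟩
    obtain ⟨f, hfb, hfF₀⟩ := Filter.nonempty_of_mem (Filter.inter_mem hxC hF₀)
    have hfx : d f x ≤ a := huP f x (le_trans hfb inf_le_left)
    refine Filter.mem_of_superset hx fun y hy => ?_
    refine Set.mem_biUnion hfF₀ ?_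
    show d f y ≤ ε
    calc d f y ≤ d f x + d x y := htri _ _ _
      _ ≤ a + (u ⊓ a) := add_le_add hfx hy
      _ ≤ a + a := add_le_add_right inf_le_right a
      _ ≤ ε := haa
  exact le_antisymm hle fun s hs => hGsub hs

end VQAux
namespace VQAux

theorem lemC {d : X → X → V} [Nonempty X] (hrefl : ∀ x, d x x = ⊥)
    (y : ∀ δ : V, WellAbove δ ⊥ → X)
    (hnet : ∀ ε : V, WellAbove ε ⊥ → ∃ δ₀ : V, WellAbove δ₀ ⊥ ∧
      ∀ δ (hδ : WellAbove δ ⊥) δ' (hδ' : WellAbove δ' ⊥), δ ≤ δ₀ → δ' ≤ δ₀ →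
        d (y δ hδ) (y δ' hδ') ≤ ε) :
    ∃ C : Filter X, C ≠ ⊥ ∧ IsCauchyF d C ∧
      ∀ ε : V, ∀ _ : WellAbove ε ⊥, ∃ δ₀ : V, ∃ hδ₀ : WellAbove δ₀ ⊥,
        ball' d ε (y δ₀ hδ₀) ∈ C ∧
        ∀ δ' (hδ' : WellAbove δ' ⊥), δ' ≤ δ₀ → d (y δ₀ hδ₀) (y δ' hδ') ≤ ε := by
  classical
  set gens : Set (Set X) := {S | ∃ δ : V, ∃ hδ : WellAbove δ ⊥, ∃ ε : V, WellAbove ε ⊥ ∧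
    (∀ δ' (hδ' : WellAbove δ' ⊥), δ' ≤ δ → d (y δ hδ) (y δ' hδ') ≤ ε) ∧
    S = ball' d ε (y δ hδ)} with hgens
  have happrox : ∀ ε : V, ∀ _ : WellAbove ε ⊥, ∃ δ₀ : V, ∃ hδ₀ : WellAbove δ₀ ⊥,
      ball' d ε (y δ₀ hδ₀) ∈ Filter.generate gens ∧
      ∀ δ' (hδ' : WellAbove δ' ⊥), δ' ≤ δ₀ → d (y δ₀ hδ₀) (y δ' hδ') ≤ ε := by
    intro ε hε
    obtain ⟨δ₀, hδ₀, hP⟩ := hnet ε hε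
    have hQ : ∀ δ' (hδ' : WellAbove δ' ⊥), δ' ≤ δ₀ → d (y δ₀ hδ₀) (y δ' hδ') ≤ ε :=
      fun δ' hδ' h => hP δ₀ hδ₀ δ' hδ' le_rfl h
    exact ⟨δ₀, hδ₀, Filter.le_generate_iff.1 le_rfl ⟨δ₀, hδ₀, ε, hε, hQ, rfl⟩, hQ⟩
  have key : ∀ u : Set (Set X), u.Finite → u ⊆ gens → ∀ δ₀ : V, WellAbove δ₀ ⊥ →
      ∃ δ1 : V, ∃ hδ1 : WellAbove δ1 ⊥, δ1 ≤ δ₀ ∧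
        ∀ δ' (hδ' : WellAbove δ' ⊥), δ' ≤ δ1 → ∀ S ∈ u, y δ' hδ' ∈ S := by
    intro u hufin
    refine Set.Finite.induction_on u hufin ?_ ?_
    · intro _ δ₀ hδ₀
      exact ⟨δ₀, hδ₀, le_rfl, fun δ' hδ' _ S hS => absurd hS (Set.notMem_empty S)⟩
    · intro S u' hSu' hu'fin ih hins δ₀ hδ₀
      obtain ⟨δ1, hδ1, h1le, h1⟩ :=
        ih (fun T hT => hins (Set.mem_insert_of_mem S hT)) δ₀ hδ₀
      obtain ⟨δS, hδS, εS, hεS, hQ, hSeq⟩ := hins (Set.mem_insert S u')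
      refine ⟨δ1 ⊓ δS, ValueQuantale.inf_wellAbove_bot _ _ hδ1 hδS,
        le_trans inf_le_left h1le, ?_⟩
      intro δ' hδ' hle T hT
      rcases Set.mem_insert_iff.1 hT with rfl | hT
      · rw [hSeq]
        exact hQ δ' hδ' (hle.trans inf_le_right)
      · exact h1 δ' hδ' (hle.trans inf_le_left) T hT
  have hproper : Filter.generate gens ≠ ⊥ := by
    intro hbot
    have h0 : (∅ : Set X) ∈ Filter.generate gens := by rw [hbot]; exact Filter.mem_bot
    rw [Filter.mem_generate_iff] at h0
    obtain ⟨t, htg, htfin, hsub⟩ := h0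
    rcases t.eq_empty_or_nonempty with rfl | ⟨S₀, hS₀⟩
    · obtain ⟨x0⟩ := ‹Nonempty X›
      exact absurd (hsub (by simp)) (Set.notMem_empty x0)
    · obtain ⟨δs, hδs, -⟩ := htg hS₀
      obtain ⟨δ1, hδ1, -, hmem⟩ := key t htfin htg δs hδs
      refine absurd (hsub ?_) (Set.notMem_empty (y δ1 hδ1))
      exact Set.mem_sInter.2 fun S hS => hmem δ1 hδ1 le_rfl S hS
  refine ⟨Filter.generate gens, hproper, ?_, happrox⟩
  intro ε hε
  obtain ⟨δ₀, hδ₀, hball, -⟩ := happrox ε hε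
  exact ⟨y δ₀ hδ₀, hball⟩

end VQAux
open VQAux

/-- `X̂`, the space of (proper) minimal Cauchy filters with the filter distance,
is Cauchy complete: every proper Cauchy filter on `X̂` converges. -/
theorem stmt19 (d : X → X → V) (hrefl : ∀ x, d x x = ⊥)
    (htri : ∀ x y z, d x z ≤ d x y + d y z) (hUVA : UVA d) :
    ∀ A : Filter {F : Filter X // F ≠ ⊥ ∧ IsMinCauchy d F}, A ≠ ⊥ →
      IsCauchyF (fun F G => distF d F.1 G.1) A →
      ∃ L : {F : Filter X // F ≠ ⊥ ∧ IsMinCauchy d F},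
        ∀ ε : V, WellAbove ε ⊥ → ball' (fun F G => distF d F.1 G.1) ε L ∈ A := by
  intro A hA hAc
  haveI : A.NeBot := ⟨hA⟩
  -- X is nonempty
  obtain ⟨P0⟩ : Nonempty {F : Filter X // F ≠ ⊥ ∧ IsMinCauchy d F} := nonempty_of_neBot A
  haveI : Nonempty X := by
    haveI : P0.1.NeBot := ⟨P0.2.1⟩
    exact Filter.nonempty_of_neBot P0.1
  -- choose, for each δ ≻ 0, a minimal Cauchy filter whose δ-ball is in A
  choose FF hFF using hAc
  -- choose a base point for each of these filters
  have hpt : ∀ δ : V, ∀ hδ : WellAbove δ ⊥, ∃ γ : V, ∃ x : X, WellAbove γ ⊥ ∧ γ ≤ δ ∧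
      (∀ p q : X, d q p ≤ γ → d p q ≤ δ) ∧ ball' d γ x ∈ (FF δ hδ).1 := by
    intro δ hδ
    obtain ⟨u, hu, huP⟩ := hUVA δ hδ
    have hγ : WellAbove (u ⊓ δ) ⊥ := ValueQuantale.inf_wellAbove_bot u δ hu hδ
    obtain ⟨x, hx⟩ := (FF δ hδ).2.2.1 (u ⊓ δ) hγ
    exact ⟨u ⊓ δ, x, hγ, inf_le_right, fun p q h => huP p q (h.trans inf_le_left), hx⟩
  choose γ x hγwa hγle hγflip hγball using hpt
  -- the net (FF δ) is Cauchy in X̂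
  have hE2 : ∀ ε : V, WellAbove ε ⊥ → ∃ δ₀ : V, WellAbove δ₀ ⊥ ∧
      ∀ δ (hδ : WellAbove δ ⊥) δ' (hδ' : WellAbove δ' ⊥), δ ≤ δ₀ → δ' ≤ δ₀ →
        distF d (FF δ hδ).1 (FF δ' hδ').1 ≤ ε := by
    intro ε hε
    obtain ⟨a, ha, haa⟩ := vq_halve hε
    obtain ⟨ρ, hρ, hρP⟩ := lemUVAhat htri hUVA ha
    refine ⟨ρ ⊓ a, ValueQuantale.inf_wellAbove_bot ρ a hρ ha, ?_⟩
    intro δ hδ δ' hδ' h1 h2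
    obtain ⟨G, hG1, hG2⟩ := Filter.nonempty_of_mem (Filter.inter_mem (hFF δ hδ) (hFF δ' hδ'))
    have hG1' : distF d (FF δ hδ).1 G.1 ≤ δ := hG1
    have hG2' : distF d (FF δ' hδ').1 G.1 ≤ δ' := hG2
    have hGF : distF d G.1 (FF δ' hδ').1 ≤ a :=
      hρP _ _ (FF δ' hδ').2.1 (FF δ' hδ').2.2.1 G.2.1 G.2.2.1
        (hG2'.trans (h2.trans inf_le_left))
    calc distF d (FF δ hδ).1 (FF δ' hδ').1
        ≤ distF d (FF δ hδ).1 G.1 + distF d G.1 (FF δ' hδ').1 :=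
          lemT htri hUVA (FF δ hδ).2.1 (FF δ hδ).2.2.1 G.2.1 G.2.2.1
            (FF δ' hδ').2.1 (FF δ' hδ').2.2.1
      _ ≤ a + a := add_le_add (hG1'.trans (h1.trans inf_le_right)) hGF
      _ ≤ ε := haa
  -- comparison between base points and filter distances
  have hAA : ∀ δ (hδ : WellAbove δ ⊥) δ' (hδ' : WellAbove δ' ⊥),
      d (x δ hδ) (x δ' hδ') ≤ δ + (distF d (FF δ hδ).1 (FF δ' hδ').1 + δ') := by
    intro δ hδ δ' hδ'
    have h := lemA htri (hγball δ hδ) (hγball δ' hδ') (hγflip δ' hδ')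
    exact h.trans (add_le_add_left (hγle δ hδ) _)
  -- the base points form a Cauchy net in X
  have hE3 : ∀ ε : V, WellAbove ε ⊥ → ∃ δ₀ : V, WellAbove δ₀ ⊥ ∧
      ∀ δ (hδ : WellAbove δ ⊥) δ' (hδ' : WellAbove δ' ⊥), δ ≤ δ₀ → δ' ≤ δ₀ →
        d (x δ hδ) (x δ' hδ') ≤ ε := by
    intro ε hε
    obtain ⟨a, ha, haε, h3⟩ := vq_small 3 hε
    obtain ⟨δ₀, hδ₀, hδ₀P⟩ := hE2 a ha
    refine ⟨δ₀ ⊓ a, ValueQuantale.inf_wellAbove_bot δ₀ a hδ₀ ha, ?_⟩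
    intro δ hδ δ' hδ' h1 h2
    calc d (x δ hδ) (x δ' hδ')
        ≤ δ + (distF d (FF δ hδ).1 (FF δ' hδ').1 + δ') := hAA δ hδ δ' hδ'
      _ ≤ a + (a + a) := add_le_add (h1.trans inf_le_right)
          (add_le_add (hδ₀P δ hδ δ' hδ' (h1.trans inf_le_left) (h2.trans inf_le_left))
            (h2.trans inf_le_right))
      _ = nmul 3 a := (nmul_three a).symm
      _ ≤ ε := h3
  -- the limit candidate filter on X
  obtain ⟨C, hCne, hCc, hCapprox⟩ := lemC hrefl x hE3
  -- C is close to FF δ for small δ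
  have hCF : ∀ ε : V, WellAbove ε ⊥ → ∃ δ₁ : V, WellAbove δ₁ ⊥ ∧
      ∀ δ (hδ : WellAbove δ ⊥), δ ≤ δ₁ → distF d C (FF δ hδ).1 ≤ ε := by
    intro ε hε
    obtain ⟨a, ha, haε, h6⟩ := vq_small 6 hε
    obtain ⟨ua, hua, huaP⟩ := hUVA a ha
    have hγ₀ : WellAbove (ua ⊓ a) ⊥ := ValueQuantale.inf_wellAbove_bot ua a hua ha
    obtain ⟨δs, hδs, hballC, hQ⟩ := hCapprox (ua ⊓ a) hγ₀
    obtain ⟨δ₀, hδ₀, hE2P⟩ := hE2 a ha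
    refine ⟨δ₀ ⊓ a, ValueQuantale.inf_wellAbove_bot δ₀ a hδ₀ ha, ?_⟩
    intro δ hδ hδle
    have hδ'' : WellAbove (δs ⊓ δ) ⊥ := ValueQuantale.inf_wellAbove_bot δs δ hδs hδ
    have t1 : d (x δs hδs) (x (δs ⊓ δ) hδ'') ≤ ua ⊓ a := hQ _ hδ'' inf_le_left
    have t3 : distF d (FF (δs ⊓ δ) hδ'').1 (FF δ hδ).1 ≤ a :=
      hE2P _ hδ'' _ hδ (le_trans inf_le_right (hδle.trans inf_le_left))
        (hδle.trans inf_le_left)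
    have hδa : δ ≤ a := hδle.trans inf_le_right
    have hB : distF d C (FF δ hδ).1 ≤ a + (d (x δs hδs) (x δ hδ) + γ δ hδ) :=
      lemB htri hCne (FF δ hδ).2.1 hballC (hγball δ hδ)
        (fun p q h => huaP p q (h.trans inf_le_left))
    calc distF d C (FF δ hδ).1
        ≤ a + (d (x δs hδs) (x δ hδ) + γ δ hδ) := hB
      _ ≤ a + ((d (x δs hδs) (x (δs ⊓ δ) hδ'') + d (x (δs ⊓ δ) hδ'') (x δ hδ)) + γ δ hδ) :=
          add_le_add_right (add_le_add_left (htri _ _ _) _) a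
      _ ≤ a + ((a + ((δs ⊓ δ) + (distF d (FF (δs ⊓ δ) hδ'').1 (FF δ hδ).1 + δ))) + γ δ hδ) :=
          add_le_add_right (add_le_add_left
            (add_le_add (t1.trans inf_le_right) (hAA _ hδ'' _ hδ)) _) a
      _ ≤ a + ((a + (a + (a + a))) + a) :=
          add_le_add_right (add_le_add
            (add_le_add_right (add_le_add (le_trans inf_le_right hδa)
              (add_le_add t3 hδa)) a) ((hγle δ hδ).trans hδa)) a
      _ = nmul 6 a := by rw [nmul_six]; abel
      _ ≤ ε := h6
  -- assemble: the limit is the roundification of C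
  obtain ⟨hRCne, hRCc, hRCmin, hCleRC⟩ := lemRound hrefl htri hUVA hCne hCc
  refine ⟨⟨roundify d C, hRCne, hRCmin⟩, ?_⟩
  intro ε hε
  obtain ⟨a, ha, haa⟩ := vq_halve hε
  obtain ⟨δ₁, hδ₁, hδ₁P⟩ := hCF a ha
  have hδ' : WellAbove (δ₁ ⊓ a) ⊥ := ValueQuantale.inf_wellAbove_bot δ₁ a hδ₁ ha
  refine Filter.mem_of_superset (hFF (δ₁ ⊓ a) hδ') fun G hG => ?_
  have hG' : distF d (FF (δ₁ ⊓ a) hδ').1 G.1 ≤ δ₁ ⊓ a := hG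
  show distF d (roundify d C) G.1 ≤ ε
  have hLF : distF d (roundify d C) (FF (δ₁ ⊓ a) hδ').1 ≤ a :=
    le_trans (distF_mono_left hCleRC) (hδ₁P _ hδ' inf_le_left)
  calc distF d (roundify d C) G.1
      ≤ distF d (roundify d C) (FF (δ₁ ⊓ a) hδ').1 + distF d (FF (δ₁ ⊓ a) hδ').1 G.1 :=
        lemT htri hUVA hRCne hRCc (FF (δ₁ ⊓ a) hδ').2.1 (FF (δ₁ ⊓ a) hδ').2.2.1
          G.2.1 G.2.2.1
    _ ≤ a + a := add_le_add hLF (hG'.trans inf_le_right)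
    _ ≤ ε := haa
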